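/- Let H be a Hilbert space, G a positive self-adjoint operator, and let b(T) denote the G¹ᐟ²-bound of an operator T defined on D(G¹ᐟ²). For G¹ᐟ²-bounded operators A and B and any E > 0, one has |b(A) − b(B)| ≤ b(A − B) ≤ N_{A−B}(E)/√E, where N_T(E) = sup{‖Tφ‖ : φ ∈ D(G¹ᐟ²), ‖φ‖ ≤ 1, ‖G¹ᐟ²φ‖² ≤ E}. -/

import Mathlib

open scoped ComplexOrder

/-- The `√G`-bound of an operator `T` restricted to `D(√G)`. -/
noncomputable def relBound {H : Type*} [NormedAddCommGroup H] [InnerProductSpace ℂ H]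
    (S : Submodule ℂ H) (sqrtG T : S →ₗ[ℂ] H) : ℝ :=
  sInf {b : ℝ | 0 ≤ b ∧ ∃ a : ℝ, 0 ≤ a ∧
    ∀ φ : S, ‖T φ‖ ^ 2 ≤ a ^ 2 * ‖(φ : H)‖ ^ 2 + b ^ 2 * ‖sqrtG φ‖ ^ 2}

/-- The (pure-state) operator E-norm `N_T(E) = sup {‖Tφ‖ : ‖φ‖ ≤ 1, ‖√G φ‖² ≤ E}`. -/
noncomputable def eNorm {H : Type*} [NormedAddCommGroup H] [InnerProductSpace ℂ H]
    (S : Submodule ℂ H) (sqrtG T : S →ₗ[ℂ] H) (E : ℝ) : ℝ :=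
  sSup {r : ℝ | ∃ φ : S, ‖(φ : H)‖ ≤ 1 ∧ ‖sqrtG φ‖ ^ 2 ≤ E ∧ r = ‖T φ‖}

section Aux

variable {H : Type*} [NormedAddCommGroup H] [InnerProductSpace ℂ H]
variable (S : Submodule ℂ H) (sqrtG : S →ₗ[ℂ] H)

/-- The set whose infimum defines `relBound`. -/
def relSet (T : S →ₗ[ℂ] H) : Set ℝ :=
  {b : ℝ | 0 ≤ b ∧ ∃ a : ℝ, 0 ≤ a ∧
    ∀ φ : S, ‖T φ‖ ^ 2 ≤ a ^ 2 * ‖(φ : H)‖ ^ 2 + b ^ 2 * ‖sqrtG φ‖ ^ 2}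

lemma relBound_eq (T : S →ₗ[ℂ] H) : relBound S sqrtG T = sInf (relSet S sqrtG T) := rfl

lemma relSet_bddBelow (T : S →ₗ[ℂ] H) : BddBelow (relSet S sqrtG T) :=
  ⟨0, fun _ hb => hb.1⟩

set_option maxHeartbeats 1000000 in
lemma relSet_add_mem {A B D : S →ₗ[ℂ] H}
    (hpt : ∀ φ : S, ‖A φ‖ ≤ ‖B φ‖ + ‖D φ‖)
    {b₁ b₂ ε : ℝ} (hε : 0 < ε)
    (h₁ : b₁ ∈ relSet S sqrtG B) (h₂ : b₂ ∈ relSet S sqrtG D) :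
    b₁ + b₂ + 2 * ε ∈ relSet S sqrtG A := by
  obtain ⟨hb₁, a₁, ha₁, hB⟩ := h₁
  obtain ⟨hb₂, a₂, ha₂, hD⟩ := h₂
  have hμ : (0:ℝ) < b₁ + ε := by linarith
  have hν : (0:ℝ) < b₂ + ε := by linarith
  set μ : ℝ := b₁ + ε with hμdef
  set ν : ℝ := b₂ + ε with hνdef
  have hmn : 0 < μ * ν := mul_pos hμ hν
  have hsum : b₁ + b₂ + 2 * ε = μ + ν := by rw [hμdef, hνdef]; ring
  have haux : (0:ℝ) ≤ (μ + ν) * (ν * a₁ ^ 2 + μ * a₂ ^ 2) / (μ * ν) := by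
    apply div_nonneg _ hmn.le
    apply mul_nonneg (by linarith)
    have := sq_nonneg a₁; have := sq_nonneg a₂
    nlinarith
  set a : ℝ := Real.sqrt ((μ + ν) * (ν * a₁ ^ 2 + μ * a₂ ^ 2) / (μ * ν)) with hadef
  have ha2 : a ^ 2 = (μ + ν) * (ν * a₁ ^ 2 + μ * a₂ ^ 2) / (μ * ν) :=
    Real.sq_sqrt haux
  have h5 : a ^ 2 * (μ * ν) = (μ + ν) * (ν * a₁ ^ 2 + μ * a₂ ^ 2) := by
    rw [ha2]; field_simp
  refine ⟨by linarith, a, Real.sqrt_nonneg _, fun φ => ?_⟩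
  set p := ‖B φ‖ with hp0
  set q := ‖D φ‖ with hq0
  set x := ‖(φ : H)‖ with hx0
  set y := ‖sqrtG φ‖ with hy0
  have hp : p ^ 2 ≤ a₁ ^ 2 * x ^ 2 + b₁ ^ 2 * y ^ 2 := hB φ
  have hq : q ^ 2 ≤ a₂ ^ 2 * x ^ 2 + b₂ ^ 2 * y ^ 2 := hD φ
  have hApq : ‖A φ‖ ^ 2 ≤ (p + q) ^ 2 := by
    have := hpt φ
    nlinarith [norm_nonneg (A φ)]
  have step1 : (p + q) ^ 2 * (μ * ν) ≤ (ν * (μ + ν)) * p ^ 2 + (μ * (μ + ν)) * q ^ 2 := by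
    nlinarith [sq_nonneg (ν * p - μ * q)]
  have e1 := mul_le_mul_of_nonneg_left hp (by nlinarith : (0:ℝ) ≤ ν * (μ + ν))
  have e2 := mul_le_mul_of_nonneg_left hq (by nlinarith : (0:ℝ) ≤ μ * (μ + ν))
  have step3 : ν * b₁ ^ 2 + μ * b₂ ^ 2 ≤ (μ * ν) * (μ + ν) := by
    have hc1 : 0 ≤ ν * b₁ * (μ - b₁) := by
      apply mul_nonneg (mul_nonneg hν.le hb₁); rw [hμdef]; linarith
    have hc2 : 0 ≤ μ * b₂ * (ν - b₂) := by
      apply mul_nonneg (mul_nonneg hμ.le hb₂); rw [hνdef]; linarith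
    have hc3 : 0 ≤ (μ * ν) * (2 * ε) := by
      apply mul_nonneg hmn.le; linarith
    have hμν : μ + ν - b₁ - b₂ = 2 * ε := by rw [hμdef, hνdef]; ring
    nlinarith [hc1, hc2, hc3, hμν]
  have step4 : (p + q) ^ 2 * (μ * ν) ≤
      (μ + ν) * ((ν * a₁ ^ 2 + μ * a₂ ^ 2) * x ^ 2) + (μ + ν) ^ 2 * (μ * ν) * y ^ 2 := by
    have h3y := mul_le_mul_of_nonneg_right
      (mul_le_mul_of_nonneg_left step3 (by linarith : (0:ℝ) ≤ μ + ν)) (sq_nonneg y)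
    nlinarith [step1, e1, e2, h3y]
  have hfin : (p + q) ^ 2 ≤ a ^ 2 * x ^ 2 + (μ + ν) ^ 2 * y ^ 2 := by
    rw [← mul_le_mul_iff_of_pos_right hmn]
    have h6 : a ^ 2 * (μ * ν) * x ^ 2 = (μ + ν) * (ν * a₁ ^ 2 + μ * a₂ ^ 2) * x ^ 2 := by
      rw [h5]
    nlinarith [step4, h6]
  rw [hsum]
  nlinarith [hApq, hfin]

lemma relBound_subadd {A B D : S →ₗ[ℂ] H}
    (hpt : ∀ φ : S, ‖A φ‖ ≤ ‖B φ‖ + ‖D φ‖)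
    (hBne : (relSet S sqrtG B).Nonempty) (hDne : (relSet S sqrtG D).Nonempty) :
    relBound S sqrtG A ≤ relBound S sqrtG B + relBound S sqrtG D := by
  rw [relBound_eq, relBound_eq, relBound_eq]
  have key : ∀ b₁ ∈ relSet S sqrtG B, ∀ b₂ ∈ relSet S sqrtG D,
      sInf (relSet S sqrtG A) ≤ b₁ + b₂ := by
    intro b₁ hb₁ b₂ hb₂
    refine le_of_forall_pos_le_add fun ε hε => ?_
    have hmem := relSet_add_mem S sqrtG hpt (half_pos hε) hb₁ hb₂
    have h := csInf_le (relSet_bddBelow S sqrtG A) hmem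
    linarith [h]
  have h1 : ∀ b₂ ∈ relSet S sqrtG D,
      sInf (relSet S sqrtG A) - b₂ ≤ sInf (relSet S sqrtG B) := fun b₂ hb₂ =>
    le_csInf hBne fun b₁ hb₁ => by linarith [key b₁ hb₁ b₂ hb₂]
  have h2 : sInf (relSet S sqrtG A) - sInf (relSet S sqrtG B) ≤ sInf (relSet S sqrtG D) :=
    le_csInf hDne fun b₂ hb₂ => by linarith [h1 b₂ hb₂]
  linarith

end Aux

set_option maxHeartbeats 1000000 in
/-- For `√G`-bounded operators `A, B` and any `E > 0`:
`|b(A) − b(B)| ≤ b(A − B) ≤ N_{A−B}(E)/√E`, so the `√G`-bound is continuous w.r.t.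
the E-norm. -/
theorem stmt8 {H : Type*} [NormedAddCommGroup H] [InnerProductSpace ℂ H] [CompleteSpace H]
    (S : Submodule ℂ H) (hdense : Dense (S : Set H))
    (sqrtG : S →ₗ[ℂ] H)
    (hsym : ∀ x y : S, (inner ℂ (sqrtG x) (y : H) : ℂ) = inner ℂ (x : H) (sqrtG y))
    (hpos : ∀ x : S, 0 ≤ (inner ℂ (x : H) (sqrtG x) : ℂ))
    (A B : S →ₗ[ℂ] H)
    (hA : ∃ a b : ℝ, 0 ≤ a ∧ 0 ≤ b ∧
      ∀ φ : S, ‖A φ‖ ^ 2 ≤ a ^ 2 * ‖(φ : H)‖ ^ 2 + b ^ 2 * ‖sqrtG φ‖ ^ 2)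
    (hB : ∃ a b : ℝ, 0 ≤ a ∧ 0 ≤ b ∧
      ∀ φ : S, ‖B φ‖ ^ 2 ≤ a ^ 2 * ‖(φ : H)‖ ^ 2 + b ^ 2 * ‖sqrtG φ‖ ^ 2)
    (E : ℝ) (hE : 0 < E) :
    |relBound S sqrtG A - relBound S sqrtG B| ≤ relBound S sqrtG (A - B) ∧
    relBound S sqrtG (A - B) ≤ eNorm S sqrtG (A - B) E / Real.sqrt E := by
  obtain ⟨aA, bA, haA, hbA, hAb⟩ := hA
  obtain ⟨aB, bB, haB, hbB, hBb⟩ := hB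
  set D : S →ₗ[ℂ] H := A - B with hDdef
  have hDφ : ∀ φ : S, D φ = A φ - B φ := fun φ => rfl
  set R : Set ℝ := {r : ℝ | ∃ φ : S, ‖(φ : H)‖ ≤ 1 ∧ ‖sqrtG φ‖ ^ 2 ≤ E ∧ r = ‖D φ‖}
    with hRdef
  have heN : eNorm S sqrtG D E = sSup R := rfl
  -- R is bounded above
  have hRbdd : BddAbove R := by
    refine ⟨Real.sqrt (aA ^ 2 + bA ^ 2 * E) + Real.sqrt (aB ^ 2 + bB ^ 2 * E), ?_⟩
    rintro r ⟨φ, hφ1, hφ2, rfl⟩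
    have hx2 : ‖(φ : H)‖ ^ 2 ≤ 1 := by nlinarith [norm_nonneg (φ : H)]
    have h1 : ‖A φ‖ ≤ Real.sqrt (aA ^ 2 + bA ^ 2 * E) := by
      rw [Real.le_sqrt (norm_nonneg _) (by positivity)]
      have e1 := mul_le_mul_of_nonneg_left hx2 (sq_nonneg aA)
      have e2 := mul_le_mul_of_nonneg_left hφ2 (sq_nonneg bA)
      linarith [hAb φ]
    have h2 : ‖B φ‖ ≤ Real.sqrt (aB ^ 2 + bB ^ 2 * E) := by
      rw [Real.le_sqrt (norm_nonneg _) (by positivity)]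
      have e1 := mul_le_mul_of_nonneg_left hx2 (sq_nonneg aB)
      have e2 := mul_le_mul_of_nonneg_left hφ2 (sq_nonneg bB)
      linarith [hBb φ]
    calc ‖D φ‖ = ‖A φ - B φ‖ := by rw [hDφ]
      _ ≤ ‖A φ‖ + ‖B φ‖ := norm_sub_le _ _
      _ ≤ _ := add_le_add h1 h2
  have hR0 : (0 : ℝ) ∈ R := ⟨0, by simp, by simp [hE.le], by simp⟩
  have hN0 : (0 : ℝ) ≤ sSup R := le_csSup hRbdd hR0
  -- key membership: sSup R / √E ∈ relSet S sqrtG D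
  have hmem : sSup R / Real.sqrt E ∈ relSet S sqrtG D := by
    refine ⟨div_nonneg hN0 (Real.sqrt_nonneg E), sSup R, hN0, fun φ => ?_⟩
    have hNE : (sSup R / Real.sqrt E) ^ 2 = (sSup R) ^ 2 / E := by
      rw [div_pow, Real.sq_sqrt hE.le]
    rw [hNE]
    by_cases hφ : φ = 0
    · subst hφ
      simp only [map_zero, norm_zero, ZeroMemClass.coe_zero]
      norm_num
    · have hxpos : 0 < ‖(φ : H)‖ := by
        rw [norm_pos_iff]
        exact fun h => hφ (Submodule.coe_eq_zero.mp h)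
      set x := ‖(φ : H)‖ with hx0
      set y := ‖sqrtG φ‖ with hy0
      have hyE : 0 ≤ y ^ 2 / E := div_nonneg (sq_nonneg y) hE.le
      set c : ℝ := max x (Real.sqrt (y ^ 2 / E)) with hcdef
      have hcpos : 0 < c := lt_of_lt_of_le hxpos (le_max_left _ _)
      have hxc : x ≤ c := le_max_left _ _
      have hyc : y ^ 2 ≤ c ^ 2 * E := by
        have h := le_max_right x (Real.sqrt (y ^ 2 / E))
        have h2 : y ^ 2 / E ≤ c ^ 2 := by
          have h3 := pow_le_pow_left₀ (Real.sqrt_nonneg (y ^ 2 / E)) h 2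
          rwa [Real.sq_sqrt hyE] at h3
        rw [div_le_iff₀ hE] at h2
        linarith
      have hc2 : c ^ 2 ≤ x ^ 2 + y ^ 2 / E := by
        rcases max_cases x (Real.sqrt (y ^ 2 / E)) with ⟨hceq, _⟩ | ⟨hceq, _⟩
        · rw [hcdef, hceq]; nlinarith
        · rw [hcdef, hceq, Real.sq_sqrt hyE]; nlinarith [sq_nonneg x]
      set ψ : S := ((c⁻¹ : ℝ) : ℂ) • φ with hψdef
      have hψcoe : (ψ : H) = ((c⁻¹ : ℝ) : ℂ) • (φ : H) := rfl
      have hnorm_inv : ‖(((c⁻¹ : ℝ)) : ℂ)‖ = c⁻¹ := by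
        rw [Complex.norm_real, Real.norm_eq_abs, abs_of_pos (inv_pos.mpr hcpos)]
      have hψnorm : ‖(ψ : H)‖ = c⁻¹ * x := by
        rw [hψcoe, norm_smul, hnorm_inv, ← hx0]
      have hψ1 : ‖(ψ : H)‖ ≤ 1 := by
        rw [hψnorm]
        have h := mul_le_mul_of_nonneg_left hxc (inv_nonneg.mpr hcpos.le)
        rwa [inv_mul_cancel₀ hcpos.ne'] at h
      have hψG : ‖sqrtG ψ‖ ^ 2 ≤ E := by
        have hGψ : sqrtG ψ = ((c⁻¹ : ℝ) : ℂ) • sqrtG φ := by rw [hψdef, map_smul]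
        rw [hGψ, norm_smul, hnorm_inv, ← hy0]
        have heq : (c⁻¹ * y) ^ 2 = y ^ 2 / c ^ 2 := by
          field_simp
        rw [heq, div_le_iff₀ (pow_pos hcpos 2)]
        linarith
      have hDψ : ‖D ψ‖ ≤ sSup R := le_csSup hRbdd ⟨ψ, hψ1, hψG, rfl⟩
      have hDψeq : ‖D ψ‖ = c⁻¹ * ‖D φ‖ := by
        have hDs : D ψ = ((c⁻¹ : ℝ) : ℂ) • D φ := by rw [hψdef, map_smul]
        rw [hDs, norm_smul, hnorm_inv]
      have hDcN : ‖D φ‖ ≤ c * sSup R := by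
        rw [hDψeq] at hDψ
        have h := mul_le_mul_of_nonneg_left hDψ hcpos.le
        rwa [← mul_assoc, mul_inv_cancel₀ hcpos.ne', one_mul] at h
      have hDsq : ‖D φ‖ ^ 2 ≤ c ^ 2 * (sSup R) ^ 2 := by
        nlinarith [norm_nonneg (D φ), mul_nonneg hcpos.le hN0]
      have hfin := mul_le_mul_of_nonneg_left hc2 (sq_nonneg (sSup R))
      calc ‖D φ‖ ^ 2 ≤ c ^ 2 * (sSup R) ^ 2 := hDsq
        _ = (sSup R) ^ 2 * c ^ 2 := by ring
        _ ≤ (sSup R) ^ 2 * (x ^ 2 + y ^ 2 / E) := hfin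
        _ = (sSup R) ^ 2 * x ^ 2 + (sSup R) ^ 2 / E * y ^ 2 := by ring
  have hDle : relBound S sqrtG D ≤ sSup R / Real.sqrt E := by
    rw [relBound_eq]
    exact csInf_le (relSet_bddBelow S sqrtG D) hmem
  have hDne : (relSet S sqrtG D).Nonempty := ⟨_, hmem⟩
  have hAne : (relSet S sqrtG A).Nonempty := ⟨bA, hbA, aA, haA, hAb⟩
  have hBne : (relSet S sqrtG B).Nonempty := ⟨bB, hbB, aB, haB, hBb⟩
  have sub1 : relBound S sqrtG A ≤ relBound S sqrtG B + relBound S sqrtG D := by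
    refine relBound_subadd S sqrtG (fun φ => ?_) hBne hDne
    have h : A φ = B φ + D φ := by rw [hDφ]; abel
    rw [h]; exact norm_add_le _ _
  have sub2 : relBound S sqrtG B ≤ relBound S sqrtG A + relBound S sqrtG D := by
    refine relBound_subadd S sqrtG (fun φ => ?_) hAne hDne
    have h : B φ = A φ - D φ := by rw [hDφ]; abel
    rw [h]; exact norm_sub_le _ _
  refine ⟨abs_sub_le_iff.mpr ⟨by linarith, by linarith⟩, ?_⟩
  rw [heN]
  exact hDle
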